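/- For every integer m ≥ 1, the sum Σ_{f=1}^{m} C(m,f)·(1/(4m))^f·(1 − 1/(4m))^{m−f} · f · e^f is strictly less than 2. -/

import Mathlib

lemma key_sum (a b : ℝ) (m : ℕ) (hm : 1 ≤ m) :
    ∑ f ∈ Finset.Icc 1 m, (f : ℝ) * m.choose f * a ^ f * b ^ (m - f)
      = m * a * (a + b) ^ (m - 1) := by
  rw [← Finset.Ico_add_one_right_eq_Icc, Finset.sum_Ico_eq_sum_range]
  have hm1 : m - 1 + 1 = m := Nat.succ_pred_eq_of_pos hm
  have hr : m + 1 - 1 = m - 1 + 1 := by omega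
  rw [hr]
  have h : ∀ i ∈ Finset.range (m - 1 + 1),
      (((1 + i : ℕ) : ℝ)) * m.choose (1 + i) * a ^ (1 + i) * b ^ (m - (1 + i))
      = m * a * (a ^ i * b ^ (m - 1 - i) * ((m-1).choose i : ℝ)) := by
    intro i hi
    simp only [Finset.mem_range] at hi
    have hchoose : m * (m-1).choose i = m.choose (1 + i) * (1 + i) := by
      have := Nat.add_one_mul_choose_eq (m - 1) i
      rw [hm1] at this
      rw [this, Nat.add_comm i 1, Nat.add_comm 1 i]
    have hcast : (m : ℝ) * ((m-1).choose i : ℝ) = (m.choose (1+i) : ℝ) * ((1 + i : ℕ) : ℝ) := by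
      exact_mod_cast congrArg (Nat.cast : ℕ → ℝ) hchoose
    have hsub : m - (1 + i) = m - 1 - i := by omega
    rw [hsub, pow_add]
    linear_combination (-(a ^ i * a * b ^ (m - 1 - i))) * hcast
  rw [Finset.sum_congr rfl h, ← Finset.mul_sum, add_pow]

theorem stmt_13 (m : ℕ) (hm : 1 ≤ m) :
    ∑ f ∈ Finset.Icc 1 m,
        (m.choose f : ℝ) * (1 / (4 * (m : ℝ))) ^ f * (1 - 1 / (4 * (m : ℝ))) ^ (m - f) *
          (f : ℝ) * Real.exp f < 2 := by
  have hm0 : (0 : ℝ) < m := by exact_mod_cast hm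
  set p : ℝ := 1 / (4 * (m : ℝ)) with hp
  have hrw : ∀ f ∈ Finset.Icc 1 m,
      (m.choose f : ℝ) * p ^ f * (1 - p) ^ (m - f) * (f : ℝ) * Real.exp f
      = (f : ℝ) * m.choose f * (p * Real.exp 1) ^ f * (1 - p) ^ (m - f) := by
    intro f _
    have : Real.exp (f : ℝ) = (Real.exp 1) ^ f := by
      rw [← Real.exp_nat_mul, mul_one]
    rw [this, mul_pow]
    ring
  rw [Finset.sum_congr rfl hrw, key_sum _ _ m hm]
  have hmp : (m : ℝ) * (p * Real.exp 1) = Real.exp 1 / 4 := by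
    rw [hp]; field_simp
  rw [hmp]
  have he1 : Real.exp 1 < 3 := by
    have := Real.exp_one_lt_d9; linarith
  have he0 : 0 < Real.exp 1 := Real.exp_pos 1
  have he2 : (2:ℝ) ≤ Real.exp 1 := by
    have := Real.add_one_le_exp (1:ℝ); linarith
  have hx : p * Real.exp 1 + (1 - p) = 1 + p * (Real.exp 1 - 1) := by ring
  have hp0 : 0 < p := by rw [hp]; positivity
  have hmp4 : (m : ℝ) * p = 1 / 4 := by rw [hp]; field_simp
  have hbase : 1 + p * (Real.exp 1 - 1) ≤ Real.exp (p * (Real.exp 1 - 1)) := by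
    linarith [Real.add_one_le_exp (p * (Real.exp 1 - 1))]
  have hbase0 : (0:ℝ) ≤ 1 + p * (Real.exp 1 - 1) := by nlinarith
  rw [hx]
  have h1 : (1 + p * (Real.exp 1 - 1)) ^ (m-1) ≤ (Real.exp (p * (Real.exp 1 - 1))) ^ (m-1) :=
    pow_le_pow_left₀ hbase0 hbase _
  have h2 : (Real.exp (p * (Real.exp 1 - 1))) ^ (m-1) ≤ Real.exp (1/2) := by
    rw [← Real.exp_nat_mul]
    apply Real.exp_le_exp.2
    have hle : ((m - 1 : ℕ) : ℝ) ≤ (m : ℝ) := by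
      exact_mod_cast Nat.cast_le.2 (Nat.sub_le m 1)
    have : ((m - 1 : ℕ) : ℝ) * (p * (Real.exp 1 - 1)) ≤ (m : ℝ) * (p * (Real.exp 1 - 1)) := by
      apply mul_le_mul_of_nonneg_right hle
      nlinarith
    calc ((m - 1 : ℕ) : ℝ) * (p * (Real.exp 1 - 1)) ≤ (m : ℝ) * (p * (Real.exp 1 - 1)) := this
      _ = (Real.exp 1 - 1) / 4 := by rw [← mul_assoc, hmp4]; ring
      _ ≤ 1/2 := by linarith
  have h3 : Real.exp (3/2) < 8 := by
    have hA : Real.exp (3/2) * Real.exp (3/2) = Real.exp 3 := by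
      rw [← Real.exp_add]; norm_num
    have hB : Real.exp 3 < 27 := by
      have h : Real.exp 3 = Real.exp 1 ^ 3 := by
        rw [show (3:ℝ) = (3:ℕ) * 1 by norm_num, Real.exp_nat_mul]
      rw [h]
      calc Real.exp 1 ^ 3 < 3 ^ 3 := by
            exact pow_lt_pow_left₀ he1 he0.le (by norm_num)
        _ = 27 := by norm_num
    nlinarith [Real.exp_pos (3/2)]
  calc Real.exp 1 / 4 * (1 + p * (Real.exp 1 - 1)) ^ (m-1)
      ≤ Real.exp 1 / 4 * Real.exp (1/2) := by
        apply mul_le_mul_of_nonneg_left (le_trans h1 h2) (by positivity)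
    _ = Real.exp (3/2) / 4 := by
        rw [div_mul_eq_mul_div, ← Real.exp_add]; norm_num
    _ < 2 := by linarith
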